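/- If s is an odd positive integer, then the sum over i from 0 to s of C(s,i)·|s−2i| equals 2s·C(s−1, (s−1)/2). -/

import Mathlib

lemma key_term (s m : ℕ) (h : m + 1 ≤ s) :
    (s.choose (m+1) : ℤ) * (s - 2*(m+1))
      = s * (s-1).choose (m+1) - s * (s-1).choose m := by
  obtain ⟨t, rfl⟩ : ∃ t, s = t + 1 := ⟨s - 1, by omega⟩
  have hB : (t+1).choose (m+1) * (m+1) = (t+1) * t.choose m := by
    rw [← Nat.add_one_mul_choose_eq]
  have hA : (t+1).choose (m+1) * ((t+1) - (m+1)) = (t+1) * t.choose (m+1) := by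
    rw [← Nat.choose_succ_right_eq, ← Nat.add_one_mul_choose_eq]
  have hle : m ≤ t := by omega
  have hc : ((t+1 : ℕ) : ℤ) - 2*(m+1) = (((t+1) - (m+1) : ℕ) : ℤ) - ((m+1 : ℕ) : ℤ) := by
    push_cast [Nat.cast_sub hle]
    ring
  rw [hc, mul_sub]
  rw [show ((t+1).choose (m+1) : ℤ) * (((t+1) - (m+1) : ℕ) : ℤ)
      = (((t+1).choose (m+1) * ((t+1) - (m+1)) : ℕ) : ℤ) by push_cast; ring, hA]
  rw [show ((t+1).choose (m+1) : ℤ) * ((m+1 : ℕ) : ℤ)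
      = (((t+1).choose (m+1) * (m+1) : ℕ) : ℤ) by push_cast; ring, hB]
  push_cast
  simp [Nat.add_sub_cancel]

lemma key_sum (s : ℕ) : ∀ m, 2*m < s →
    ∑ i ∈ Finset.range (m+1), (s.choose i : ℤ) * (s - 2*i) = s * (s-1).choose m := by
  intro m
  induction m with
  | zero => intro _; simp
  | succ m ih =>
    intro h
    rw [Finset.sum_range_succ, ih (by omega)]
    have := key_term s m (by omega)
    push_cast at this ⊢
    linarith [this]

theorem stmt2 (s : ℕ) (hs : 0 < s) (hodd : Odd s) :
    ∑ i ∈ Finset.range (s + 1), s.choose i * ((s : ℤ) - 2 * i).natAbs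
      = 2 * s * (s - 1).choose ((s - 1) / 2) := by
  obtain ⟨m, rfl⟩ := hodd
  rw [show (2*m+1-1 : ℕ) = 2*m from by omega, show (2*m)/2 = m from by omega]
  set g : ℕ → ℤ := fun i => ((2*m+1).choose i : ℤ) * |((2*m+1 : ℕ) : ℤ) - 2 * i| with hg
  have hsym : ∀ i ≤ 2*m+1, g ((2*m+1) - i) = g i := by
    intro i hi
    simp only [hg]
    rw [Nat.choose_symm hi]
    congr 1
    rw [show (((2*m+1) - i : ℕ) : ℤ) = ((2*m+1 : ℕ) : ℤ) - i from by
      push_cast [Nat.cast_sub hi]; ring]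
    rw [show ((2*m+1 : ℕ) : ℤ) - 2 * (((2*m+1 : ℕ) : ℤ) - i)
        = -(((2*m+1 : ℕ) : ℤ) - 2*i) from by ring, abs_neg]
  have hsplit : ∑ i ∈ Finset.range (2*m+1+1), g i
      = ∑ i ∈ Finset.range (m+1), g i + ∑ i ∈ Finset.range (m+1), g (m+1+i) := by
    rw [Finset.range_eq_Ico,
      ← Finset.sum_Ico_consecutive _ (by omega : 0 ≤ m+1) (by omega : m+1 ≤ 2*m+1+1)]
    congr 1
    · rw [Finset.range_eq_Ico]
    rw [Finset.sum_Ico_eq_sum_range,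
      show 2*m+1+1-(m+1) = m+1 from by omega, Finset.range_eq_Ico]
  have hrefl : ∑ i ∈ Finset.range (m+1), g (m+1+i) = ∑ i ∈ Finset.range (m+1), g i := by
    have h1 : ∀ i ∈ Finset.range (m+1), g (m+1+i) = g (m - i) := by
      intro i hi
      simp only [Finset.mem_range] at hi
      rw [show m - i = (2*m+1) - (m+1+i) from by omega, hsym (m+1+i) (by omega)]
    rw [Finset.sum_congr rfl h1, ← Finset.sum_range_reflect]
    apply Finset.sum_congr rfl
    intro i hi
    simp only [Finset.mem_range] at hi
    congr 1
    omega
  have hhalf : ∑ i ∈ Finset.range (m+1), g i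
      = ((2*m+1 : ℕ) : ℤ) * ((2*m).choose m : ℤ) := by
    have hk := key_sum (2*m+1) m (by omega)
    rw [show (2*m+1-1 : ℕ) = 2*m from by omega] at hk
    rw [← hk]
    apply Finset.sum_congr rfl
    intro i hi
    simp only [Finset.mem_range] at hi
    simp only [hg]
    congr 1
    apply abs_of_nonneg
    have : (i : ℤ) ≤ m := by exact_mod_cast Nat.le_of_lt_succ hi
    push_cast
    linarith
  have H : ∑ i ∈ Finset.range (2*m+1+1), g i
      = 2 * ((2*m+1 : ℕ) : ℤ) * ((2*m).choose m : ℤ) := by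
    rw [hsplit, hrefl, hhalf]; ring
  have goalZ : ((∑ i ∈ Finset.range (2*m+1+1),
      (2*m+1).choose i * (((2*m+1 : ℕ) : ℤ) - 2 * i).natAbs : ℕ) : ℤ)
      = ((2 * (2*m+1) * (2*m).choose m : ℕ) : ℤ) := by
    push_cast [Int.natCast_natAbs]
    simp only [hg] at H
    push_cast at H
    linarith [H]
  exact_mod_cast goalZ
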